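/- Let α, β ∈ ℝ, write w(x,t) = αt − βx, and let z = (u,p,q) : ℝ × ℝ → ℝ³ be differentiable. Define the 3×3 matrix fields M(x,t) with entries M₁₂ = e^{w}, M₂₁ = −e^{w} and all other entries 0, and K(x,t) with entries K₁₃ = −e^{w}, K₃₁ = e^{w} and all other entries 0; define F(u,p,q,x,t) = (−½ e^{w} p, ½ e^{w} u, 0), G(u,p,q,x,t) = (½ e^{w} q, 0, −½ e^{w} u), and B(u,p,q,x,t) = −½ e^{w}(u² + p² − q² + α u p + β u q). Then z satisfies the multi-symplectic Birkhoff equation M(x,t) z_t + K(x,t) z_x = ∇_z B(z,x,t) + (∂F/∂t)(z,x,t) + (∂G/∂x)(z,x,t) at a point (x,t) (where ∂F/∂t and ∂G/∂x are partial derivatives in the explicit t and x arguments with z held fixed, and ∇_z B is the gradient of B in the z = (u,p,q) arguments) if and only if at that point u_t = p, u_x = q, and p_t − q_x + u + α p + β q = 0. -/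

import Mathlib

open Real

lemma dpoly0 (α β P Q U : ℝ) :
    deriv (fun y : ℝ => y ^ 2 + P ^ 2 - Q ^ 2 + α * y * P + β * y * Q) U
      = 2 * U + α * P + β * Q := by
  have h : HasDerivAt (fun y : ℝ => y ^ 2 + P ^ 2 - Q ^ 2 + α * y * P + β * y * Q)
      (2 * U + α * P + β * Q) U := by
    have h1 := (((hasDerivAt_pow 2 U).add_const (P ^ 2)).sub_const (Q ^ 2))
    have h2 := ((hasDerivAt_id U).const_mul α).mul_const P
    have h3 := ((hasDerivAt_id U).const_mul β).mul_const Q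
    refine ((h1.add h2).add h3).congr_deriv ?_
    norm_num
  exact h.deriv

lemma dpoly1 (α U Q P : ℝ) :
    deriv (fun y : ℝ => U ^ 2 + y ^ 2 - Q ^ 2 + α * U * y) P = 2 * P + α * U := by
  have h : HasDerivAt (fun y : ℝ => U ^ 2 + y ^ 2 - Q ^ 2 + α * U * y)
      (2 * P + α * U) P := by
    have h1 := (((hasDerivAt_pow 2 P).const_add (U ^ 2)).sub_const (Q ^ 2))
    have h2 := (hasDerivAt_id P).const_mul (α * U)
    refine (h1.add h2).congr_deriv ?_
    norm_num
  exact h.deriv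

lemma dpoly2 (α β U P Q : ℝ) :
    deriv (fun y : ℝ => U ^ 2 + P ^ 2 - y ^ 2 + α * U * P + β * U * y) Q
      = -(2 * Q) + β * U := by
  have h : HasDerivAt (fun y : ℝ => U ^ 2 + P ^ 2 - y ^ 2 + α * U * P + β * U * y)
      (-(2 * Q) + β * U) Q := by
    have h1 := ((hasDerivAt_pow 2 Q).const_sub (U ^ 2 + P ^ 2)).add_const (α * U * P)
    have h2 := (hasDerivAt_id Q).const_mul (β * U)
    refine (h1.add h2).congr_deriv ?_
    norm_num
  exact h.deriv

lemma dexp1 (α c t : ℝ) :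
    deriv (fun s : ℝ => Real.exp (α * s - c)) t = α * Real.exp (α * t - c) := by
  have h : HasDerivAt (fun s : ℝ => Real.exp (α * s - c)) (α * Real.exp (α * t - c)) t := by
    have h1 : HasDerivAt (fun s : ℝ => α * s - c) α t := by
      simpa using ((hasDerivAt_id t).const_mul α).sub_const c
    simpa [mul_comm] using h1.exp
  exact h.deriv

lemma dexp2 (a β x : ℝ) :
    deriv (fun s : ℝ => Real.exp (a - β * s)) x = -(β * Real.exp (a - β * x)) := by
  have h : HasDerivAt (fun s : ℝ => Real.exp (a - β * s)) (-(β * Real.exp (a - β * x))) x := by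
    have h1 : HasDerivAt (fun s : ℝ => a - β * s) (-β) x := by
      simpa using ((hasDerivAt_id x).const_mul β).const_sub a
    simpa [mul_comm] using h1.exp
  exact h.deriv


open Real Matrix

set_option maxHeartbeats 1000000 in
/-- With `w(x,t) = αt − βx`, the matrix fields `M`, `K`, the
one-form components `F`, `G` and the Birkhoffian `B` of the damped string
equation, a differentiable `z = (u,p,q) : ℝ × ℝ → ℝ³` satisfies the
multi-symplectic Birkhoff equation
`M z_t + K z_x = ∇_z B + ∂F/∂t + ∂G/∂x` at a point `(x,t)` iff at that point
`u_t = p`, `u_x = q` and `p_t − q_x + u + α p + β q = 0`. -/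
theorem damped_string_birkhoff_iff
    (α β : ℝ) (u p q : ℝ × ℝ → ℝ)
    (hu : Differentiable ℝ u) (hp : Differentiable ℝ p) (hq : Differentiable ℝ q)
    (x t : ℝ) :
    let w : ℝ → ℝ → ℝ := fun X T => α * T - β * X
    let M : ℝ → ℝ → Matrix (Fin 3) (Fin 3) ℝ := fun X T =>
      !![0, exp (w X T), 0; -exp (w X T), 0, 0; 0, 0, 0]
    let K : ℝ → ℝ → Matrix (Fin 3) (Fin 3) ℝ := fun X T =>
      !![0, 0, -exp (w X T); 0, 0, 0; exp (w X T), 0, 0]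
    let F : (Fin 3 → ℝ) → ℝ → ℝ → Fin 3 → ℝ := fun Z X T =>
      ![-(1 / 2) * exp (w X T) * Z 1, (1 / 2) * exp (w X T) * Z 0, 0]
    let G : (Fin 3 → ℝ) → ℝ → ℝ → Fin 3 → ℝ := fun Z X T =>
      ![(1 / 2) * exp (w X T) * Z 2, 0, -(1 / 2) * exp (w X T) * Z 0]
    let B : (Fin 3 → ℝ) → ℝ → ℝ → ℝ := fun Z X T =>
      -(1 / 2) * exp (w X T) *
        (Z 0 ^ 2 + Z 1 ^ 2 - Z 2 ^ 2 + α * Z 0 * Z 1 + β * Z 0 * Z 2)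
    let z : ℝ × ℝ → Fin 3 → ℝ := fun P => ![u P, p P, q P]
    let zt : Fin 3 → ℝ := fun μ => deriv (fun s => z (x, s) μ) t
    let zx : Fin 3 → ℝ := fun μ => deriv (fun s => z (s, t) μ) x
    ((∀ μ : Fin 3,
        (M x t *ᵥ zt) μ + (K x t *ᵥ zx) μ =
          deriv (fun s => B (Function.update (z (x, t)) μ s) x t) (z (x, t) μ)
            + deriv (fun s => F (z (x, t)) x s μ) t
            + deriv (fun s => G (z (x, t)) s t μ) x)
      ↔
      (deriv (fun s => u (x, s)) t = p (x, t) ∧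
       deriv (fun s => u (s, t)) x = q (x, t) ∧
       deriv (fun s => p (x, s)) t - deriv (fun s => q (s, t)) x
         + u (x, t) + α * p (x, t) + β * q (x, t) = 0)) := by
  intro w M K F G B z zt zx
  have hE := Real.exp_pos (α * t - β * x)
  constructor
  · intro h
    have h0 := h 0
    have h1 := h 1
    have h2 := h 2
    simp [Matrix.mulVec, dotProduct, Fin.sum_univ_three, Function.update_apply,
      Matrix.vecHead, Matrix.vecTail,
      w, M, K, F, G, B, z, zt, zx] at h0 h1 h2
    rw [dpoly0, dexp1, dexp2] at h0
    rw [dpoly1, dexp1] at h1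
    rw [dpoly2, dexp2] at h2
    refine ⟨?_, ?_, ?_⟩
    · exact mul_left_cancel₀ (ne_of_gt hE)
        (show rexp (α * t - β * x) * deriv (fun s => u (x, s)) t
            = rexp (α * t - β * x) * p (x, t) by linear_combination (-1 : ℝ) * h1)
    · exact mul_left_cancel₀ (ne_of_gt hE)
        (show rexp (α * t - β * x) * deriv (fun s => u (s, t)) x
            = rexp (α * t - β * x) * q (x, t) by linear_combination h2)
    · have := mul_left_cancel₀ (ne_of_gt hE)
        (show rexp (α * t - β * x) * (deriv (fun s => p (x, s)) t - deriv (fun s => q (s, t)) x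
            + u (x, t) + α * p (x, t) + β * q (x, t)) = rexp (α * t - β * x) * 0 by
          linear_combination h0)
      linarith
  · rintro ⟨e1, e2, e3⟩ μ
    fin_cases μ <;>
      simp [Matrix.mulVec, dotProduct, Fin.sum_univ_three, Function.update_apply,
      Matrix.vecHead, Matrix.vecTail,
        w, M, K, F, G, B, z, zt, zx]
    · rw [dpoly0, dexp1, dexp2]
      linear_combination rexp (α * t - β * x) * e3
    · rw [dpoly1, dexp1]
      linear_combination (-(rexp (α * t - β * x))) * e1
    · rw [dpoly2, dexp2]
      linear_combination rexp (α * t - β * x) * e2
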